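/- arXiv:1809.08830 — 2 statements merged into one kernel-verified Lean document; each statement's English description precedes it below -/
import Mathlib

section
/- Let γ ≥ 0, let D ∈ ℝ^{d×d} be symmetric positive semidefinite with D ≠ 0, and let Σ ∈ ℝ^{d×d} be symmetric positive definite. If γ I_d − D is not positive definite, then the function S ↦ ⟨D, S⟩ − γ·Tr(S − 2(Σ^{1/2} S Σ^{1/2})^{1/2}) is unbounded above on the set of symmetric positive semidefinite matrices S ∈ ℝ^{d×d}. -/
open Matrix

-- `msqrt M` is the unique symmetric PSD square root of a symmetric PSD matrix `M` (else `0`).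
open Classical in
noncomputable def msqrt {ι : Type*} [Fintype ι] [DecidableEq ι] (M : Matrix ι ι ℝ) : Matrix ι ι ℝ :=
  if h : M.PosSemidef then
    (h.1.eigenvectorUnitary : Matrix ι ι ℝ) * diagonal (Real.sqrt ∘ h.1.eigenvalues) *
      (star h.1.eigenvectorUnitary : Matrix ι ι ℝ) else 0

open scoped MatrixOrder in
lemma msqrt_eq_cfcSqrt {d : ℕ} {M : Matrix (Fin d) (Fin d) ℝ} (h : M.PosSemidef) :
    msqrt M = CFC.sqrt M := by
  rw [CFC.sqrt_eq_cfc, cfc_nnreal_eq_real _ M h.nonneg, h.1.cfc_eq, msqrt, dif_pos h]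
  simp only [IsHermitian.cfc, Unitary.conjStarAlgAut_apply]
  congr 3
  funext x
  simp only [Function.comp_apply, RCLike.ofReal_real_eq_id, id]
  rw [Real.coe_sqrt, Real.coe_toNNReal _ (h.eigenvalues_nonneg x)]

section helpers

variable {d : ℕ}

lemma vecMulVec_mulVec' (u v x : Fin d → ℝ) : vecMulVec u v *ᵥ x = (v ⬝ᵥ x) • u := by
  ext i
  simp only [mulVec, dotProduct, vecMulVec_apply, Pi.smul_apply, smul_eq_mul, Finset.sum_mul]
  exact Finset.sum_congr rfl fun j _ => by ring

lemma psd_smul_vecMulVec {t : ℝ} (ht : 0 ≤ t) (u : Fin d → ℝ) :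
    (t • vecMulVec u u).PosSemidef := by
  apply PosSemidef.of_dotProduct_mulVec_nonneg
  · ext i j
    simp [vecMulVec_apply, conjTranspose_apply, mul_comm]
  · intro x
    rw [smul_mulVec, dotProduct_smul, vecMulVec_mulVec', dotProduct_smul]
    simp only [star_trivial, smul_eq_mul]
    rw [dotProduct_comm u x]
    exact mul_nonneg ht (mul_self_nonneg _)

lemma mul_vecMulVec_mul (A B : Matrix (Fin d) (Fin d) ℝ) (u v : Fin d → ℝ) :
    A * vecMulVec u v * B = vecMulVec (A *ᵥ u) (Bᵀ *ᵥ v) := by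
  ext i j
  simp only [mul_apply, vecMulVec_apply, mulVec, dotProduct, transpose_apply,
    Finset.sum_mul, Finset.mul_sum]
  exact Finset.sum_congr rfl fun l _ => Finset.sum_congr rfl fun k _ => by ring

lemma trace_vecMulVec' (u v : Fin d → ℝ) : (vecMulVec u v).trace = v ⬝ᵥ u := by
  simp [trace, Matrix.diag, vecMulVec_apply, dotProduct, mul_comm]

lemma trace_transpose_mul_vecMulVec (A : Matrix (Fin d) (Fin d) ℝ) (u : Fin d → ℝ) :
    (Aᵀ * vecMulVec u u).trace = u ⬝ᵥ A *ᵥ u := by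
  simp only [trace, Matrix.diag, mul_apply, transpose_apply, vecMulVec_apply, dotProduct, mulVec,
    Finset.mul_sum]
  rw [Finset.sum_comm]
  exact Finset.sum_congr rfl fun i _ => Finset.sum_congr rfl fun j _ => by ring

lemma vecMulVec_mul_vecMulVec (w : Fin d → ℝ) :
    vecMulVec w w * vecMulVec w w = (w ⬝ᵥ w) • vecMulVec w w := by
  ext i j
  simp only [mul_apply, vecMulVec_apply, Matrix.smul_apply, smul_eq_mul, dotProduct, Finset.sum_mul,
    Finset.mul_sum]
  exact Finset.sum_congr rfl fun k _ => by ring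

open scoped MatrixOrder in
lemma msqrt_smul_vecMulVec {t : ℝ} (ht : 0 ≤ t) {w : Fin d → ℝ} (hw : 0 < w ⬝ᵥ w) :
    msqrt (t • vecMulVec w w) = (Real.sqrt t / Real.sqrt (w ⬝ᵥ w)) • vecMulVec w w := by
  have hM : (t • vecMulVec w w).PosSemidef := psd_smul_vecMulVec ht w
  have hcoef : 0 ≤ Real.sqrt t / Real.sqrt (w ⬝ᵥ w) :=
    div_nonneg (Real.sqrt_nonneg _) (Real.sqrt_nonneg _)
  have hC : ((Real.sqrt t / Real.sqrt (w ⬝ᵥ w)) • vecMulVec w w).PosSemidef :=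
    psd_smul_vecMulVec hcoef w
  have hsq : ((Real.sqrt t / Real.sqrt (w ⬝ᵥ w)) • vecMulVec w w) ^ 2 = t • vecMulVec w w := by
    rw [pow_two, Matrix.smul_mul, Matrix.mul_smul, smul_smul, vecMulVec_mul_vecMulVec,
      smul_smul]
    congr 1
    have h1 : Real.sqrt t * Real.sqrt t = t := Real.mul_self_sqrt ht
    have h2 : Real.sqrt (w ⬝ᵥ w) * Real.sqrt (w ⬝ᵥ w) = w ⬝ᵥ w := Real.mul_self_sqrt hw.le
    have h3 : Real.sqrt (w ⬝ᵥ w) ≠ 0 := by positivity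
    field_simp
    rw [sq, sq, h1, h2]
    ring
  rw [msqrt_eq_cfcSqrt hM]
  exact (CFC.sqrt_eq_iff _ _ hM.nonneg hC.nonneg).mpr ((pow_two _).symm.trans hsq)

end helpers

/-- The objective `S ↦ ⟨D, S⟩ − γ·Tr(S − 2(Σ^{1/2} S Σ^{1/2})^{1/2})`. -/
noncomputable def obj {d : ℕ} (γ : ℝ) (D Sg S : Matrix (Fin d) (Fin d) ℝ) : ℝ :=
  (Dᵀ * S).trace - γ * (S - (2:ℝ) • msqrt (msqrt Sg * S * msqrt Sg)).trace


open scoped MatrixOrder in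
lemma obj_eval {d : ℕ} (γ : ℝ) (D Sg : Matrix (Fin d) (Fin d) ℝ) (hSg : Sg.PosDef)
    {u : Fin d → ℝ} (hu : u ≠ 0) {t : ℝ} (ht : 0 ≤ t) :
    obj γ D Sg (t • vecMulVec u u) =
      t * (u ⬝ᵥ D *ᵥ u) -
        γ * (t * (u ⬝ᵥ u) - 2 * (Real.sqrt t * Real.sqrt (u ⬝ᵥ Sg *ᵥ u))) := by
  have hSgp := hSg.posSemidef
  have hmS : msqrt Sg = CFC.sqrt Sg := msqrt_eq_cfcSqrt hSgp
  set R := CFC.sqrt Sg with hRdef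
  have hRt : Rᵀ = R := by
    rw [← conjTranspose_eq_transpose_of_trivial]
    exact (Matrix.nonneg_iff_posSemidef.mp (CFC.sqrt_nonneg Sg)).isHermitian.eq
  set w := R *ᵥ u with hwdef
  have hww : w ⬝ᵥ w = u ⬝ᵥ Sg *ᵥ u := by
    rw [hwdef, dotProduct_mulVec, ← hRt, vecMul_transpose, mulVec_mulVec, hRt,
      CFC.sqrt_mul_sqrt_self Sg hSgp.nonneg, dotProduct_comm]
  have hc : 0 < u ⬝ᵥ Sg *ᵥ u := by simpa using hSg.dotProduct_mulVec_pos hu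
  have hcw : 0 < w ⬝ᵥ w := hww ▸ hc
  have hRSR : msqrt Sg * (t • vecMulVec u u) * msqrt Sg = t • vecMulVec w w := by
    rw [hmS, Matrix.mul_smul, Matrix.smul_mul, mul_vecMulVec_mul, hRt]
  have hb : (0:ℝ) < Real.sqrt (w ⬝ᵥ w) := Real.sqrt_pos.mpr hcw
  have htr3 : (msqrt (msqrt Sg * (t • vecMulVec u u) * msqrt Sg)).trace
      = Real.sqrt t * Real.sqrt (u ⬝ᵥ Sg *ᵥ u) := by
    rw [hRSR, msqrt_smul_vecMulVec ht hcw, trace_smul, smul_eq_mul, trace_vecMulVec', ← hww]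
    have h2 : Real.sqrt (w ⬝ᵥ w) * Real.sqrt (w ⬝ᵥ w) = w ⬝ᵥ w := Real.mul_self_sqrt hcw.le
    field_simp
    rw [sq, h2]
  rw [obj, Matrix.mul_smul, trace_sub, trace_smul, trace_smul, trace_smul, smul_eq_mul,
    smul_eq_mul, smul_eq_mul, htr3, trace_transpose_mul_vecMulVec, trace_vecMulVec']

/-- If `γ ≥ 0` but `γ I − D` is not positive definite, then
`S ↦ ⟨D,S⟩ − γ·Tr(S − 2(Σ^{1/2} S Σ^{1/2})^{1/2})` is unbounded above over symmetric PSD `S`. -/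
theorem stmt2 {d : ℕ} (γ : ℝ) (hγ0 : 0 ≤ γ) (D Sg : Matrix (Fin d) (Fin d) ℝ)
    (hD : D.PosSemidef) (hD0 : D ≠ 0) (hSg : Sg.PosDef)
    (hγ : ¬ (γ • (1 : Matrix (Fin d) (Fin d) ℝ) - D).PosDef) :
    ¬ BddAbove { r : ℝ | ∃ S : Matrix (Fin d) (Fin d) ℝ, S.PosSemidef ∧ r = obj γ D Sg S } := by
  rintro ⟨m, hm⟩
  rcases eq_or_lt_of_le hγ0 with hγz | hγpos
  · -- γ = 0
    have hex : ∃ u : Fin d → ℝ, 0 < u ⬝ᵥ D *ᵥ u := by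
      by_contra h
      push_neg at h
      apply hD0
      have hz : ∀ x : Fin d → ℝ, D *ᵥ x = 0 := by
        intro x
        have h1 := hD.dotProduct_mulVec_nonneg x
        rw [star_trivial] at h1
        have h2 : x ⬝ᵥ D *ᵥ x = 0 := le_antisymm (h x) h1
        rw [← star_trivial x] at h2
        exact (hD.dotProduct_mulVec_zero_iff x).mp h2
      ext i j
      have := congrFun (hz (Pi.single j 1)) i
      simpa using this
    obtain ⟨u, hu⟩ := hex
    have hu0 : u ≠ 0 := by rintro rfl; simp at hu
    set a := u ⬝ᵥ D *ᵥ u with hadef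
    set t := max ((m + 1) / a) 0 with htdef
    have ht : 0 ≤ t := le_max_right _ _
    have hle := hm ⟨t • vecMulVec u u, psd_smul_vecMulVec ht u, rfl⟩
    rw [obj_eval γ D Sg hSg hu0 ht, ← hγz] at hle
    have h1 : (m + 1) / a ≤ t := le_max_left _ _
    have h2 : m + 1 ≤ t * a := by
      rw [div_le_iff₀ hu] at h1
      linarith
    simp only [zero_mul, sub_zero] at hle
    linarith
  · -- γ > 0
    have hherm : (γ • (1 : Matrix (Fin d) (Fin d) ℝ) - D).IsHermitian := by
      unfold Matrix.IsHermitian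
      rw [conjTranspose_sub, conjTranspose_smul, conjTranspose_one, hD.isHermitian.eq,
        star_trivial]
    simp only [Matrix.posDef_iff_dotProduct_mulVec, not_and] at hγ
    have hγ' := hγ hherm
    push_neg at hγ'
    obtain ⟨u, hu0, hq⟩ := hγ'
    rw [star_trivial, sub_mulVec, smul_mulVec, one_mulVec, dotProduct_sub,
      dotProduct_smul, smul_eq_mul] at hq
    have ha : γ * (u ⬝ᵥ u) ≤ u ⬝ᵥ D *ᵥ u := by linarith
    set c := u ⬝ᵥ Sg *ᵥ u with hcdef
    have hc : 0 < c := by simpa using hSg.dotProduct_mulVec_pos hu0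
    set b := Real.sqrt c with hbdef
    have hb : 0 < b := Real.sqrt_pos.mpr hc
    set t := ((|m| + 1) / (2 * γ * b)) ^ 2 with htdef
    have ht : 0 ≤ t := sq_nonneg _
    have hst : Real.sqrt t = (|m| + 1) / (2 * γ * b) := by
      rw [htdef, Real.sqrt_sq (by positivity)]
    have hle := hm ⟨t • vecMulVec u u, psd_smul_vecMulVec ht u, rfl⟩
    rw [obj_eval γ D Sg hSg hu0 ht, ← hcdef] at hle
    have hkey : γ * (2 * (Real.sqrt t * b)) = |m| + 1 := by
      rw [hst]
      field_simp
    have hta : γ * (t * (u ⬝ᵥ u)) ≤ t * (u ⬝ᵥ D *ᵥ u) := by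
      calc γ * (t * (u ⬝ᵥ u)) = t * (γ * (u ⬝ᵥ u)) := by ring
        _ ≤ t * (u ⬝ᵥ D *ᵥ u) := mul_le_mul_of_nonneg_left ha ht
    have habs : m < |m| + 1 := lt_of_le_of_lt (le_abs_self m) (by linarith)
    nlinarith [hle, hkey, hta, habs]
end

section
/- Let Σ ∈ ℝ^{d×d} be symmetric positive definite and D ∈ ℝ^{d×d} symmetric positive semidefinite, and let γ ∈ ℝ be such that γ I_d − D is positive definite. Then L(γ) = γ² (γ I_d − D)^{-1} Σ (γ I_d − D)^{-1} satisfies L(γ) ⪰ λ_min(Σ)·I_d, where λ_min(Σ) denotes the smallest eigenvalue of Σ and A ⪰ B means that A − B is symmetric positive semidefinite. -/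
open Matrix

/-- `Bdist Sg S = Tr(S + Σ − 2(Σ^{1/2} S Σ^{1/2})^{1/2})`. -/
noncomputable def Bdist {ι : Type*} [Fintype ι] [DecidableEq ι] (Sg S : Matrix ι ι ℝ) : ℝ :=
  (S + Sg - (2:ℝ) • msqrt (msqrt Sg * S * msqrt Sg)).trace


section aux
variable {d : ℕ}

lemma psd_smul {A : Matrix (Fin d) (Fin d) ℝ} (hA : A.PosSemidef) {c : ℝ} (hc : 0 ≤ c) :
    (c • A).PosSemidef := by
  refine Matrix.PosSemidef.of_dotProduct_mulVec_nonneg ?_ fun x => ?_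
  · unfold Matrix.IsHermitian
    rw [conjTranspose_smul, hA.1.eq]
    simp
  · rw [smul_mulVec, dotProduct_smul, smul_eq_mul]
    exact mul_nonneg hc (hA.dotProduct_mulVec_nonneg x)

/-- If `c ≤` all eigenvalues of a Hermitian `A`, then `A - c•1` is PSD. -/
lemma sub_smul_one_psd {A : Matrix (Fin d) (Fin d) ℝ} (hA : A.IsHermitian)
    {c : ℝ} (hc : ∀ i, c ≤ hA.eigenvalues i) :
    (A - c • (1 : Matrix (Fin d) (Fin d) ℝ)).PosSemidef := by
  set U : Matrix (Fin d) (Fin d) ℝ := (hA.eigenvectorUnitary : Matrix (Fin d) (Fin d) ℝ) with hUdef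
  have hU : U * star U = 1 := (Matrix.mem_unitaryGroup_iff).mp hA.eigenvectorUnitary.2
  have hdiag : (diagonal (RCLike.ofReal ∘ hA.eigenvalues) : Matrix (Fin d) (Fin d) ℝ)
      = diagonal hA.eigenvalues := by
    congr 1
  have key : A - c • (1 : Matrix (Fin d) (Fin d) ℝ)
      = U * diagonal (fun i => hA.eigenvalues i - c) * Uᴴ := by
    have h1 : (diagonal (fun i => hA.eigenvalues i - c) : Matrix (Fin d) (Fin d) ℝ)
        = diagonal hA.eigenvalues - c • 1 := by
      rw [smul_one_eq_diagonal, diagonal_sub]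
    rw [← Matrix.star_eq_conjTranspose, h1, Matrix.mul_sub, Matrix.sub_mul,
      Matrix.mul_smul, Matrix.smul_mul, mul_one, hU, ← hdiag]
    conv_lhs => rw [hA.spectral_theorem, Unitary.conjStarAlgAut_apply]
  rw [key]
  exact (posSemidef_diagonal_iff.mpr fun i => sub_nonneg.2 (hc i)).mul_mul_conjTranspose_same U

/-- If all eigenvalues of Hermitian `M` satisfy `m i ^ 2 ≤ c`, then `c•1 - M*M` is PSD. -/
lemma smul_one_sub_sq_psd {M : Matrix (Fin d) (Fin d) ℝ} (hM : M.IsHermitian)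
    {c : ℝ} (hc : ∀ i, hM.eigenvalues i ^ 2 ≤ c) :
    (c • (1 : Matrix (Fin d) (Fin d) ℝ) - M * M).PosSemidef := by
  set U : Matrix (Fin d) (Fin d) ℝ := (hM.eigenvectorUnitary : Matrix (Fin d) (Fin d) ℝ) with hUdef
  have hU : U * star U = 1 := (Matrix.mem_unitaryGroup_iff).mp hM.eigenvectorUnitary.2
  have hU' : star U * U = 1 := (Matrix.mem_unitaryGroup_iff').mp hM.eigenvectorUnitary.2
  have hdiag : (diagonal (RCLike.ofReal ∘ hM.eigenvalues) : Matrix (Fin d) (Fin d) ℝ)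
      = diagonal hM.eigenvalues := by congr 1
  have hMM : M * M = U * diagonal (fun i => hM.eigenvalues i * hM.eigenvalues i) * star U := by
    conv_lhs => rw [hM.spectral_theorem, Unitary.conjStarAlgAut_apply, ← hUdef, hdiag]
    rw [← diagonal_mul_diagonal]
    simp only [Matrix.mul_assoc]
    rw [← Matrix.mul_assoc (star U) U, hU', Matrix.one_mul]
  have key : c • (1 : Matrix (Fin d) (Fin d) ℝ) - M * M
      = U * diagonal (fun i => c - hM.eigenvalues i * hM.eigenvalues i) * Uᴴ := by
    have h1 : (diagonal (fun i => c - hM.eigenvalues i * hM.eigenvalues i)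
        : Matrix (Fin d) (Fin d) ℝ)
        = c • 1 - diagonal (fun i => hM.eigenvalues i * hM.eigenvalues i) := by
      rw [smul_one_eq_diagonal, diagonal_sub]
    rw [← Matrix.star_eq_conjTranspose, h1, Matrix.mul_sub, Matrix.sub_mul,
      Matrix.mul_smul, Matrix.smul_mul, mul_one, hU, ← hMM]
  rw [key]
  refine (posSemidef_diagonal_iff.mpr fun i => ?_).mul_mul_conjTranspose_same U
  have := hc i
  nlinarith [sq_nonneg (hM.eigenvalues i)]

end aux

/-- For `γ I − D ≻ 0`, `L(γ) = γ² (γI − D)⁻¹ Σ (γI − D)⁻¹` satisfies `L(γ) ⪰ λ_min(Σ) I`. -/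
theorem stmt5 {d : ℕ} [NeZero d] (Sg D : Matrix (Fin d) (Fin d) ℝ)
    (hSg : Sg.PosDef) (hD : D.PosSemidef)
    (γ : ℝ) (hγ : (γ • (1 : Matrix (Fin d) (Fin d) ℝ) - D).PosDef) :
    (γ ^ 2 • ((γ • (1 : Matrix (Fin d) (Fin d) ℝ) - D)⁻¹ * Sg *
        (γ • (1 : Matrix (Fin d) (Fin d) ℝ) - D)⁻¹) -
      (⨅ i, hSg.1.eigenvalues i) • (1 : Matrix (Fin d) (Fin d) ℝ)).PosSemidef := by
  set M : Matrix (Fin d) (Fin d) ℝ := γ • (1 : Matrix (Fin d) (Fin d) ℝ) - D with hMdef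
  set lam : ℝ := ⨅ i, hSg.1.eigenvalues i with hlam
  have hMher : M.IsHermitian := hγ.1
  have hdet : IsUnit M.det := isUnit_iff_ne_zero.mpr hγ.det_pos.ne'
  -- eigenvalues of M and γ
  set m : Fin d → ℝ := hMher.eigenvalues with hm
  have hm_pos : ∀ i, 0 < m i := hγ.eigenvalues_pos
  -- m i ≤ γ
  set V : Matrix (Fin d) (Fin d) ℝ := (hMher.eigenvectorUnitary : Matrix (Fin d) (Fin d) ℝ)
    with hVdef
  have hV' : star V * V = 1 := (Matrix.mem_unitaryGroup_iff').mp hMher.eigenvectorUnitary.2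
  have hdiagm : star V * M * V = diagonal m := by
    conv_lhs => rw [hMher.spectral_theorem, Unitary.conjStarAlgAut_apply, ← hVdef]
    simp only [Matrix.mul_assoc]
    rw [← Matrix.mul_assoc (star V) V, hV', Matrix.one_mul, Matrix.mul_one]; congr 1
  have hDconj : (star V * D * V).PosSemidef := by
    have := hD.mul_mul_conjTranspose_same (star V)
    rwa [Matrix.star_eq_conjTranspose, conjTranspose_conjTranspose] at this
  have hDconj_eq : star V * D * V = diagonal (fun i => γ - m i) := by
    have hDM : D = γ • (1 : Matrix (Fin d) (Fin d) ℝ) - M := by rw [hMdef, sub_sub_cancel]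
    rw [hDM, Matrix.mul_sub, Matrix.sub_mul, Matrix.mul_smul, Matrix.smul_mul, mul_one, hV',
      hdiagm, smul_one_eq_diagonal, diagonal_sub]
  have hmle : ∀ i, m i ≤ γ := by
    intro i
    have := posSemidef_diagonal_iff.mp (hDconj_eq ▸ hDconj) i
    linarith
  have hγpos : 0 < γ := lt_of_lt_of_le (hm_pos ⟨0, Nat.pos_of_ne_zero (NeZero.ne d)⟩)
    (hmle ⟨0, Nat.pos_of_ne_zero (NeZero.ne d)⟩)
  have hlam_nonneg : 0 ≤ lam :=
    le_ciInf fun i => hSg.posSemidef.eigenvalues_nonneg i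
  -- key identity
  have h1 : M⁻¹ * M = 1 := Matrix.nonsing_inv_mul M hdet
  have h2 : M * M⁻¹ = 1 := Matrix.mul_nonsing_inv M hdet
  have key : γ ^ 2 • (M⁻¹ * Sg * M⁻¹) - lam • (1 : Matrix (Fin d) (Fin d) ℝ)
      = M⁻¹ * (γ ^ 2 • Sg - lam • (M * M)) * M⁻¹ := by
    have hA' : M⁻¹ * (γ ^ 2 • Sg) * M⁻¹ = γ ^ 2 • (M⁻¹ * Sg * M⁻¹) := by
      rw [Matrix.mul_smul, Matrix.smul_mul]
    have hB' : M⁻¹ * (lam • (M * M)) * M⁻¹ = lam • (1 : Matrix (Fin d) (Fin d) ℝ) := by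
      rw [Matrix.mul_smul, Matrix.smul_mul, ← Matrix.mul_assoc, h1, Matrix.one_mul, h2]
    rw [Matrix.mul_sub, Matrix.sub_mul, hA', hB']
  have hsplit : γ ^ 2 • Sg - lam • (M * M)
      = γ ^ 2 • (Sg - lam • (1 : Matrix (Fin d) (Fin d) ℝ))
        + lam • (γ ^ 2 • (1 : Matrix (Fin d) (Fin d) ℝ) - M * M) := by
    rw [smul_sub, smul_sub, smul_smul, smul_smul, mul_comm]
    abel
  have psdA : (Sg - lam • (1 : Matrix (Fin d) (Fin d) ℝ)).PosSemidef :=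
    sub_smul_one_psd hSg.1 fun i => ciInf_le (Finite.bddBelow_range _) i
  have psdB : (γ ^ 2 • (1 : Matrix (Fin d) (Fin d) ℝ) - M * M).PosSemidef :=
    smul_one_sub_sq_psd hMher fun i => by nlinarith [hm_pos i, hmle i]
  have psdC : (γ ^ 2 • Sg - lam • (M * M)).PosSemidef := by
    rw [hsplit]
    exact (psd_smul psdA (sq_nonneg γ)).add (psd_smul psdB hlam_nonneg)
  have hMinvH : M⁻¹.IsHermitian := hMher.inv
  have final := psdC.mul_mul_conjTranspose_same M⁻¹
  rw [hMinvH.eq] at final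
  rw [key]
  exact final
end
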